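/- Let r∈(1,1/(1−γ)), a∈L^∞(0,T;ℝ^{n×n}) with ‖a‖_{L^∞}≤c₂, M∈L^∞(0,T;ℝ^{n×n}) with ‖M(t)‖≤L a.e., and v∈ℝⁿ with ‖v‖≤c₁. Then the unique solution p∈L^r(0,T;ℝⁿ) of the backward integral equation p(t)=((T−t)^{γ−1}/Γ(γ)) v + ∫_t^T ((s−t)^{γ−1}/Γ(γ)) a(s)ᵀ M(s) p(s) ds satisfies ‖p(t)‖ ≤ C·c₁·(T−t)^{γ−1} for a.e. t∈(0,T), where C>0 depends only on c₂, L, γ and T. -/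

import Mathlib

open MeasureTheory Set Filter Topology

noncomputable section

/-- `ℝⁿ` with the Euclidean norm. -/
abbrev Vec (n : ℕ) := EuclideanSpace ℝ (Fin n)

/-- `ℝ^{n×n}` with the Frobenius (Euclidean) norm. -/
abbrev Mat (n : ℕ) := EuclideanSpace ℝ ((Fin n) × (Fin n))

/-- Matrix-vector multiplication `A * x`. -/
def mv {n : ℕ} (A : Mat n) (x : Vec n) : Vec n :=
  (WithLp.equiv 2 (Fin n → ℝ)).symm (fun i => ∑ j, A (i, j) * x j)

/-- Transposed matrix-vector multiplication `Aᵀ * x`. -/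
def mvT {n : ℕ} (A : Mat n) (x : Vec n) : Vec n :=
  (WithLp.equiv 2 (Fin n → ℝ)).symm (fun i => ∑ j, A (j, i) * x j)

open scoped ENNReal NNReal


lemma lint_rpow_left {α t u : ℝ} (hα : -1 < α) (h : t ≤ u) :
    ∫⁻ s in Ioc t u, ENNReal.ofReal ((s - t) ^ α)
      = ENNReal.ofReal ((u - t) ^ (α + 1) / (α + 1)) := by
  have hα1 : (0:ℝ) < α + 1 := by linarith
  have hint : IntervalIntegrable (fun s => (s - t) ^ α) volume t u := by
    have := (intervalIntegral.intervalIntegrable_rpow' (a := t - t) (b := u - t) hα).comp_sub_right t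
    simpa using this
  rw [← ofReal_integral_eq_lintegral_ofReal
      ((intervalIntegrable_iff_integrableOn_Ioc_of_le h).mp hint)
      (by filter_upwards [ae_restrict_mem measurableSet_Ioc] with s hs
          exact Real.rpow_nonneg (by linarith [hs.1]) _)]
  rw [← intervalIntegral.integral_of_le h]
  rw [show (∫ s in t..u, (s - t) ^ α) = ∫ x in (t-t)..(u-t), x ^ α from
    intervalIntegral.integral_comp_sub_right (fun x => x ^ α) t]
  rw [integral_rpow (Or.inl hα)]
  rw [sub_self, Real.zero_rpow (by positivity)]
  ring_nf

lemma lint_rpow_right {β t u : ℝ} (hβ : -1 < β) (h : t ≤ u) :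
    ∫⁻ s in Ioc t u, ENNReal.ofReal ((u - s) ^ β)
      = ENNReal.ofReal ((u - t) ^ (β + 1) / (β + 1)) := by
  have hβ1 : (0:ℝ) < β + 1 := by linarith
  have hint : IntervalIntegrable (fun s => (u - s) ^ β) volume t u := by
    have := (intervalIntegral.intervalIntegrable_rpow' (a := u - u) (b := u - t) hβ).comp_sub_left u
    simpa using this.symm
  rw [← ofReal_integral_eq_lintegral_ofReal
      ((intervalIntegrable_iff_integrableOn_Ioc_of_le h).mp hint)
      (by filter_upwards [ae_restrict_mem measurableSet_Ioc] with s hs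
          exact Real.rpow_nonneg (by linarith [hs.2]) _)]
  rw [← intervalIntegral.integral_of_le h]
  rw [show (∫ s in t..u, (u - s) ^ β) = ∫ x in (u-u)..(u-t), x ^ β from
    intervalIntegral.integral_comp_sub_left (fun x => x ^ β) u]
  rw [integral_rpow (Or.inl hβ)]
  rw [sub_self, Real.zero_rpow (by positivity)]
  ring_nf


noncomputable def Cc (α β : ℝ) : ℝ :=
  (2:ℝ)^|β| * (2:ℝ)^|α+β+1| / (α+1) + (2:ℝ)^|α| * (2:ℝ)^|α+β+1| / (β+1)

lemma Cc_nonneg {α β : ℝ} (hα : -1 < α) (hβ : -1 < β) : 0 ≤ Cc α β := by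
  have h1 : (0:ℝ) < α + 1 := by linarith
  have h2 : (0:ℝ) < β + 1 := by linarith
  unfold Cc; positivity

/-- midpoint bound for a Beta-type integral -/
lemma lint_beta_le {α β t u : ℝ} (hα : -1 < α) (hβ : -1 < β) (htu : t < u) :
    ∫⁻ s in Ioc t u, ENNReal.ofReal ((s-t)^α) * ENNReal.ofReal ((u-s)^β)
      ≤ ENNReal.ofReal (Cc α β * (u-t)^(α+β+1)) := by
  set m := (t+u)/2 with hm
  set h := (u-t)/2 with hh
  have hhpos : 0 < h := by simp only [hh]; linarith
  have htm : t ≤ m := by simp only [hm]; linarith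
  have hmu : m ≤ u := by simp only [hm]; linarith
  have hmt : m - t = h := by simp only [hm, hh]; ring
  have hum : u - m = h := by simp only [hm, hh]; ring
  have hsplit : Ioc t m ∪ Ioc m u = Ioc t u := Ioc_union_Ioc_eq_Ioc htm hmu
  have hdisj : Disjoint (Ioc t m) (Ioc m u) := by
    exact Set.Ioc_disjoint_Ioc_of_le le_rfl
  rw [← hsplit, lintegral_union measurableSet_Ioc hdisj]
  -- pointwise bounds
  have hb1 : ∀ s ∈ Ioc t m, (u - s)^β ≤ (2:ℝ)^|β| * h^β := by
    intro s hs
    have h1 : h ≤ u - s := by simp only [hm] at hs ⊢; rcases hs with ⟨_, h2⟩; simp only [hh]; linarith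
    have h2 : u - s ≤ 2*h := by simp only [hm] at hs; rcases hs with ⟨h3, _⟩; simp only [hh]; linarith
    rcases le_or_gt β 0 with hb | hb
    · calc (u-s)^β ≤ h^β := Real.rpow_le_rpow_of_nonpos hhpos h1 hb
        _ = 1 * h^β := (one_mul _).symm
        _ ≤ (2:ℝ)^|β| * h^β := by
            apply mul_le_mul_of_nonneg_right _ (Real.rpow_nonneg hhpos.le _)
            exact Real.one_le_rpow one_le_two (abs_nonneg _)
    · calc (u-s)^β ≤ (2*h)^β := Real.rpow_le_rpow (by linarith) h2 hb.le
        _ = 2^β * h^β := Real.mul_rpow zero_le_two hhpos.le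
        _ ≤ (2:ℝ)^|β| * h^β := by
            apply mul_le_mul_of_nonneg_right _ (Real.rpow_nonneg hhpos.le _)
            exact Real.rpow_le_rpow_of_exponent_le one_le_two (le_abs_self _)
  have hb2 : ∀ s ∈ Ioc m u, (s - t)^α ≤ (2:ℝ)^|α| * h^α := by
    intro s hs
    have h1 : h ≤ s - t := by rcases hs with ⟨h2, _⟩; simp only [hm] at h2; simp only [hh]; linarith
    have h2 : s - t ≤ 2*h := by rcases hs with ⟨_, h3⟩; simp only [hh]; linarith
    rcases le_or_gt α 0 with hb | hb
    · calc (s-t)^α ≤ h^α := Real.rpow_le_rpow_of_nonpos hhpos h1 hb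
        _ = 1 * h^α := (one_mul _).symm
        _ ≤ (2:ℝ)^|α| * h^α := by
            apply mul_le_mul_of_nonneg_right _ (Real.rpow_nonneg hhpos.le _)
            exact Real.one_le_rpow one_le_two (abs_nonneg _)
    · calc (s-t)^α ≤ (2*h)^α := Real.rpow_le_rpow (by linarith) h2 hb.le
        _ = 2^α * h^α := Real.mul_rpow zero_le_two hhpos.le
        _ ≤ (2:ℝ)^|α| * h^α := by
            apply mul_le_mul_of_nonneg_right _ (Real.rpow_nonneg hhpos.le _)
            exact Real.rpow_le_rpow_of_exponent_le one_le_two (le_abs_self _)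
  have key1 : ∫⁻ s in Ioc t m, ENNReal.ofReal ((s-t)^α) * ENNReal.ofReal ((u-s)^β)
      ≤ ENNReal.ofReal ((2:ℝ)^|β| * h^β) * ENNReal.ofReal (h^(α+1)/(α+1)) := by
    calc ∫⁻ s in Ioc t m, ENNReal.ofReal ((s-t)^α) * ENNReal.ofReal ((u-s)^β)
        ≤ ∫⁻ s in Ioc t m, ENNReal.ofReal ((2:ℝ)^|β| * h^β) * ENNReal.ofReal ((s-t)^α) := by
          apply setLIntegral_mono (by fun_prop) (fun s hs => ?_)
          rw [mul_comm]
          exact mul_le_mul_left (ENNReal.ofReal_le_ofReal (hb1 s hs)) _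
      _ = ENNReal.ofReal ((2:ℝ)^|β| * h^β) * ∫⁻ s in Ioc t m, ENNReal.ofReal ((s-t)^α) :=
          lintegral_const_mul' _ _ ENNReal.ofReal_ne_top
      _ = ENNReal.ofReal ((2:ℝ)^|β| * h^β) * ENNReal.ofReal (h^(α+1)/(α+1)) := by
          rw [lint_rpow_left hα htm, hmt]
  have key2 : ∫⁻ s in Ioc m u, ENNReal.ofReal ((s-t)^α) * ENNReal.ofReal ((u-s)^β)
      ≤ ENNReal.ofReal ((2:ℝ)^|α| * h^α) * ENNReal.ofReal (h^(β+1)/(β+1)) := by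
    calc ∫⁻ s in Ioc m u, ENNReal.ofReal ((s-t)^α) * ENNReal.ofReal ((u-s)^β)
        ≤ ∫⁻ s in Ioc m u, ENNReal.ofReal ((2:ℝ)^|α| * h^α) * ENNReal.ofReal ((u-s)^β) := by
          apply setLIntegral_mono (by fun_prop) (fun s hs => ?_)
          exact mul_le_mul_left (ENNReal.ofReal_le_ofReal (hb2 s hs)) _
      _ = ENNReal.ofReal ((2:ℝ)^|α| * h^α) * ∫⁻ s in Ioc m u, ENNReal.ofReal ((u-s)^β) :=
          lintegral_const_mul' _ _ ENNReal.ofReal_ne_top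
      _ = ENNReal.ofReal ((2:ℝ)^|α| * h^α) * ENNReal.ofReal (h^(β+1)/(β+1)) := by
          rw [lint_rpow_right hβ hmu, hum]
  -- real arithmetic
  set e := α+β+1 with hE
  have hut : (0:ℝ) ≤ u - t := by linarith
  have hhe : h^e ≤ (2:ℝ)^|e| * (u-t)^e := by
    have h1 : h = (u-t) * 2⁻¹ := by rw [hh]; ring
    rw [h1, Real.mul_rpow hut (by norm_num), Real.inv_rpow (by norm_num),
      ← Real.rpow_neg (by norm_num), mul_comm]
    exact mul_le_mul_of_nonneg_right
      (Real.rpow_le_rpow_of_exponent_le one_le_two (neg_le_abs e))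
      (Real.rpow_nonneg hut e)
  have hα1 : (0:ℝ) < α + 1 := by linarith
  have hβ1 : (0:ℝ) < β + 1 := by linarith
  have ha1b1 : (2:ℝ)^|β| * h^β * (h^(α+1)/(α+1)) ≤ (2:ℝ)^|β| * (2:ℝ)^|e|/(α+1) * (u-t)^e := by
    have h2 : h^e = h^β * h^(α+1) := by
      rw [show e = β+(α+1) by rw [hE]; ring]; exact Real.rpow_add hhpos _ _
    calc (2:ℝ)^|β| * h^β * (h^(α+1)/(α+1)) = (2:ℝ)^|β| * (h^β * h^(α+1)) / (α+1) := by ring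
      _ = (2:ℝ)^|β| * h^e / (α+1) := by rw [← h2]
      _ ≤ (2:ℝ)^|β| * ((2:ℝ)^|e| * (u-t)^e) / (α+1) := by gcongr
      _ = (2:ℝ)^|β| * (2:ℝ)^|e|/(α+1) * (u-t)^e := by ring
  have ha2b2 : (2:ℝ)^|α| * h^α * (h^(β+1)/(β+1)) ≤ (2:ℝ)^|α| * (2:ℝ)^|e|/(β+1) * (u-t)^e := by
    have h2 : h^e = h^α * h^(β+1) := by
      rw [show e = α+(β+1) by rw [hE]; ring]; exact Real.rpow_add hhpos _ _
    calc (2:ℝ)^|α| * h^α * (h^(β+1)/(β+1)) = (2:ℝ)^|α| * (h^α * h^(β+1)) / (β+1) := by ring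
      _ = (2:ℝ)^|α| * h^e / (β+1) := by rw [← h2]
      _ ≤ (2:ℝ)^|α| * ((2:ℝ)^|e| * (u-t)^e) / (β+1) := by gcongr
      _ = (2:ℝ)^|α| * (2:ℝ)^|e|/(β+1) * (u-t)^e := by ring
  calc (∫⁻ s in Ioc t m, ENNReal.ofReal ((s-t)^α) * ENNReal.ofReal ((u-s)^β))
        + ∫⁻ s in Ioc m u, ENNReal.ofReal ((s-t)^α) * ENNReal.ofReal ((u-s)^β)
      ≤ ENNReal.ofReal ((2:ℝ)^|β| * h^β) * ENNReal.ofReal (h^(α+1)/(α+1))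
        + ENNReal.ofReal ((2:ℝ)^|α| * h^α) * ENNReal.ofReal (h^(β+1)/(β+1)) :=
        add_le_add key1 key2
    _ = ENNReal.ofReal ((2:ℝ)^|β| * h^β * (h^(α+1)/(α+1)))
        + ENNReal.ofReal ((2:ℝ)^|α| * h^α * (h^(β+1)/(β+1))) := by
        rw [← ENNReal.ofReal_mul (by positivity), ← ENNReal.ofReal_mul (by positivity)]
    _ ≤ ENNReal.ofReal ((2:ℝ)^|β| * (2:ℝ)^|e|/(α+1) * (u-t)^e)
        + ENNReal.ofReal ((2:ℝ)^|α| * (2:ℝ)^|e|/(β+1) * (u-t)^e) :=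
        add_le_add (ENNReal.ofReal_le_ofReal ha1b1) (ENNReal.ofReal_le_ofReal ha2b2)
    _ = ENNReal.ofReal ((2:ℝ)^|β| * (2:ℝ)^|e|/(α+1) * (u-t)^e
        + (2:ℝ)^|α| * (2:ℝ)^|e|/(β+1) * (u-t)^e) := by
        rw [← ENNReal.ofReal_add (by positivity) (by positivity)]
    _ = ENNReal.ofReal (Cc α β * (u-t)^e) := by
        simp only [Cc, hE]; ring

lemma lint_swap {t T : ℝ} (F : ℝ → ℝ≥0∞) (hF : Measurable F) (G : ℝ → ℝ → ℝ≥0∞)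
    (hG : Measurable (Function.uncurry G)) :
    ∫⁻ s in Ioc t T, F s * ∫⁻ u in Ioc s T, G s u
      = ∫⁻ u in Ioc t T, ∫⁻ s in Ioo t u, F s * G s u := by
  set S : Set (ℝ × ℝ) := {q | t < q.1} ∩ {q | q.1 < q.2} ∩ {q | q.2 ≤ T} with hSdef
  have hmemS : ∀ q : ℝ × ℝ, q ∈ S ↔ t < q.1 ∧ q.1 < q.2 ∧ q.2 ≤ T := by
    intro q; simp [hSdef, Set.mem_inter_iff, Set.mem_setOf_eq, and_assoc]
  have hS : MeasurableSet S :=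
    ((measurableSet_lt measurable_const measurable_fst).inter
      (measurableSet_lt measurable_fst measurable_snd)).inter
      (measurableSet_le measurable_snd measurable_const)
  have hGq : Measurable (fun q : ℝ × ℝ => G q.1 q.2) := hG
  have hH : Measurable (fun q : ℝ × ℝ => S.indicator (fun q : ℝ × ℝ => F q.1 * G q.1 q.2) q) :=
    ((hF.comp measurable_fst).mul hGq).indicator hS
  have left : ∀ s : ℝ, (∫⁻ u, S.indicator (fun q : ℝ × ℝ => F q.1 * G q.1 q.2) (s, u))
      = (Ioc t T).indicator (fun s' => F s' * ∫⁻ u in Ioc s' T, G s' u) s := by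
    intro s
    by_cases hs : s ∈ Ioc t T
    · rw [indicator_of_mem hs]
      have heq : ∀ u, S.indicator (fun q : ℝ × ℝ => F q.1 * G q.1 q.2) (s, u)
          = (Ioc s T).indicator (fun u => F s * G s u) u := by
        intro u
        by_cases hu : u ∈ Ioc s T
        · rw [indicator_of_mem hu, indicator_of_mem ((hmemS (s,u)).mpr ⟨hs.1, hu.1, hu.2⟩)]
        · rw [indicator_of_notMem hu, indicator_of_notMem]
          rw [hmemS]; rintro ⟨_, h1, h2⟩; exact hu ⟨h1, h2⟩
      simp_rw [heq]
      rw [lintegral_indicator measurableSet_Ioc]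
      exact lintegral_const_mul (F s) (hG.comp measurable_prodMk_left)
    · rw [indicator_of_notMem hs]
      have heq : ∀ u, S.indicator (fun q : ℝ × ℝ => F q.1 * G q.1 q.2) (s, u) = 0 := by
        intro u; apply indicator_of_notMem
        rw [hmemS]; rintro ⟨h1, h2, h3⟩; exact hs ⟨h1, by linarith⟩
      simp_rw [heq]; exact lintegral_zero
  have right : ∀ u : ℝ, (∫⁻ s, S.indicator (fun q : ℝ × ℝ => F q.1 * G q.1 q.2) (s, u))
      = (Ioc t T).indicator (fun u' => ∫⁻ s in Ioo t u', F s * G s u') u := by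
    intro u
    by_cases hu : u ∈ Ioc t T
    · rw [indicator_of_mem hu]
      have heq : ∀ s, S.indicator (fun q : ℝ × ℝ => F q.1 * G q.1 q.2) (s, u)
          = (Ioo t u).indicator (fun s => F s * G s u) s := by
        intro s
        by_cases hsu : s ∈ Ioo t u
        · rw [indicator_of_mem hsu, indicator_of_mem ((hmemS (s,u)).mpr ⟨hsu.1, hsu.2, hu.2⟩)]
        · rw [indicator_of_notMem hsu, indicator_of_notMem]
          rw [hmemS]; rintro ⟨h1, h2, _⟩; exact hsu ⟨h1, h2⟩
      simp_rw [heq]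
      rw [lintegral_indicator measurableSet_Ioo]
    · rw [indicator_of_notMem hu]
      have heq : ∀ s, S.indicator (fun q : ℝ × ℝ => F q.1 * G q.1 q.2) (s, u) = 0 := by
        intro s; apply indicator_of_notMem
        rw [hmemS]; rintro ⟨h1, h2, h3⟩; exact hu ⟨by linarith, h3⟩
      simp_rw [heq]; exact lintegral_zero
  calc ∫⁻ s in Ioc t T, F s * ∫⁻ u in Ioc s T, G s u
      = ∫⁻ s, (Ioc t T).indicator (fun s' => F s' * ∫⁻ u in Ioc s' T, G s' u) s :=
        (lintegral_indicator measurableSet_Ioc _).symm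
    _ = ∫⁻ s, ∫⁻ u, S.indicator (fun q : ℝ × ℝ => F q.1 * G q.1 q.2) (s, u) := by
        simp_rw [left]
    _ = ∫⁻ u, ∫⁻ s, S.indicator (fun q : ℝ × ℝ => F q.1 * G q.1 q.2) (s, u) :=
        lintegral_lintegral_swap hH.aemeasurable
    _ = ∫⁻ u, (Ioc t T).indicator (fun u' => ∫⁻ s in Ioo t u', F s * G s u') u := by
        simp_rw [right]
    _ = ∫⁻ u in Ioc t T, ∫⁻ s in Ioo t u, F s * G s u :=
        lintegral_indicator measurableSet_Ioc _

lemma norm_mv_le {n : ℕ} (A : Mat n) (x : Vec n) : ‖mv A x‖ ≤ ‖A‖ * ‖x‖ := by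
  have h1 : ∀ i : Fin n, (∑ j, A (i,j) * x j)^2 ≤ (∑ j, A (i,j)^2) * ∑ j, (x j)^2 :=
    fun i => Finset.sum_mul_sq_le_sq_mul_sq _ _ _
  calc ‖mv A x‖ = Real.sqrt (∑ i, (∑ j, A (i,j) * x j)^2) := by
        rw [EuclideanSpace.norm_eq]
        congr 1
        apply Finset.sum_congr rfl
        intro i _
        rw [show (mv A x) i = ∑ j, A (i,j) * x j by
          simp [mv]]
        rw [Real.norm_eq_abs, sq_abs]
    _ ≤ Real.sqrt ((∑ i, ∑ j, A (i,j)^2) * ∑ j, (x j)^2) := by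
        apply Real.sqrt_le_sqrt
        rw [Finset.sum_mul]
        exact Finset.sum_le_sum fun i _ => h1 i
    _ = Real.sqrt (∑ i, ∑ j, A (i,j)^2) * Real.sqrt (∑ j, (x j)^2) :=
        Real.sqrt_mul (Finset.sum_nonneg fun i _ => Finset.sum_nonneg fun j _ => sq_nonneg _) _
    _ = ‖A‖ * ‖x‖ := by
        rw [EuclideanSpace.norm_eq, EuclideanSpace.norm_eq]
        have hA : (∑ i : Fin n × Fin n, ‖A i‖^2) = ∑ i : Fin n, ∑ j : Fin n, A (i,j)^2 := by
          rw [Fintype.sum_prod_type]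
          exact Finset.sum_congr rfl fun i _ => Finset.sum_congr rfl fun j _ => by
            rw [Real.norm_eq_abs, sq_abs]
        have hx : (∑ j, ‖x j‖^2) = ∑ j, (x j)^2 :=
          Finset.sum_congr rfl fun j _ => by rw [Real.norm_eq_abs, sq_abs]
        rw [hA, hx]

lemma norm_mvT_le {n : ℕ} (A : Mat n) (x : Vec n) : ‖mvT A x‖ ≤ ‖A‖ * ‖x‖ := by
  have h1 : ∀ i : Fin n, (∑ j, A (j,i) * x j)^2 ≤ (∑ j, A (j,i)^2) * ∑ j, (x j)^2 :=
    fun i => Finset.sum_mul_sq_le_sq_mul_sq _ _ _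
  calc ‖mvT A x‖ = Real.sqrt (∑ i, (∑ j, A (j,i) * x j)^2) := by
        rw [EuclideanSpace.norm_eq]
        congr 1
        apply Finset.sum_congr rfl
        intro i _
        rw [show (mvT A x) i = ∑ j, A (j,i) * x j by
          simp [mvT]]
        rw [Real.norm_eq_abs, sq_abs]
    _ ≤ Real.sqrt ((∑ i, ∑ j, A (j,i)^2) * ∑ j, (x j)^2) := by
        apply Real.sqrt_le_sqrt
        rw [Finset.sum_mul]
        exact Finset.sum_le_sum fun i _ => h1 i
    _ = Real.sqrt (∑ i, ∑ j, A (j,i)^2) * Real.sqrt (∑ j, (x j)^2) :=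
        Real.sqrt_mul (Finset.sum_nonneg fun i _ => Finset.sum_nonneg fun j _ => sq_nonneg _) _
    _ = ‖A‖ * ‖x‖ := by
        rw [EuclideanSpace.norm_eq, EuclideanSpace.norm_eq]
        have hA : (∑ i : Fin n × Fin n, ‖A i‖^2) = ∑ i : Fin n, ∑ j : Fin n, A (j,i)^2 := by
          rw [Fintype.sum_prod_type]
          rw [Finset.sum_comm]
          exact Finset.sum_congr rfl fun i _ => Finset.sum_congr rfl fun j _ => by
            rw [Real.norm_eq_abs, sq_abs]
        have hx : (∑ j, ‖x j‖^2) = ∑ j, (x j)^2 :=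
          Finset.sum_congr rfl fun j _ => by rw [Real.norm_eq_abs, sq_abs]
        rw [hA, hx]

lemma stepA {T γ : ℝ} (hT : 0 < T) (hγ0 : 0 < γ) (hγ1 : γ < 1)
    (φ : ℝ → ℝ≥0∞) (hφ : Measurable φ)
    {c K' : ℝ} (hc : 0 ≤ c) (hK' : 0 ≤ K')
    (key : ∀ᵐ t ∂(volume.restrict (Ioo (0:ℝ) T)),
      φ t ≤ ENNReal.ofReal (c * (T-t)^(γ-1)) +
        ENNReal.ofReal K' * ∫⁻ s in Ioc t T, ENNReal.ofReal ((s-t)^(γ-1)) * φ s)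
    {d D e : ℝ} (hd : 0 ≤ d) (hD : 0 ≤ D) (he : -1 < e)
    (claim : ∀ᵐ t ∂(volume.restrict (Ioo (0:ℝ) T)),
      φ t ≤ ENNReal.ofReal (d * (T-t)^(γ-1)) +
        ENNReal.ofReal D * ∫⁻ s in Ioc t T, ENNReal.ofReal ((s-t)^e) * φ s) :
    ∀ᵐ t ∂(volume.restrict (Ioo (0:ℝ) T)),
      φ t ≤ ENNReal.ofReal ((c + K' * d * Cc (γ-1) (γ-1) * T^γ) * (T-t)^(γ-1)) +
        ENNReal.ofReal (K' * D * Cc (γ-1) e) *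
          ∫⁻ s in Ioc t T, ENNReal.ofReal ((s-t)^(γ+e)) * φ s := by
  have hγ1' : -1 < γ - 1 := by linarith
  filter_upwards [key, ae_restrict_mem measurableSet_Ioo] with t hkey ht
  obtain ⟨ht0, htT⟩ := ht
  -- the claim holds a.e. on `Ioc t T`
  have claim' : ∀ᵐ s ∂(volume.restrict (Ioc t T)),
      φ s ≤ ENNReal.ofReal (d * (T-s)^(γ-1)) +
        ENNReal.ofReal D * ∫⁻ u in Ioc s T, ENNReal.ofReal ((u-s)^e) * φ u := by
    rw [← Measure.restrict_congr_set (Ioo_ae_eq_Ioc (a := t) (b := T))]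
    exact ae_restrict_of_ae_restrict_of_subset (Ioo_subset_Ioo_left ht0.le) claim
  -- term 1 : the beta-type integral
  have hterm1 : ∫⁻ s in Ioc t T,
        ENNReal.ofReal ((s-t)^(γ-1)) * ENNReal.ofReal (d * (T-s)^(γ-1))
      ≤ ENNReal.ofReal (d * Cc (γ-1) (γ-1) * T^γ * (T-t)^(γ-1)) := by
    have h1 : ∀ s : ℝ, ENNReal.ofReal ((s-t)^(γ-1)) * ENNReal.ofReal (d * (T-s)^(γ-1))
        = ENNReal.ofReal d * (ENNReal.ofReal ((s-t)^(γ-1)) * ENNReal.ofReal ((T-s)^(γ-1))) := by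
      intro s; rw [ENNReal.ofReal_mul hd]; ring
    simp_rw [h1]
    rw [lintegral_const_mul' _ _ ENNReal.ofReal_ne_top]
    calc ENNReal.ofReal d * ∫⁻ s in Ioc t T,
          ENNReal.ofReal ((s-t)^(γ-1)) * ENNReal.ofReal ((T-s)^(γ-1))
        ≤ ENNReal.ofReal d * ENNReal.ofReal (Cc (γ-1) (γ-1) * (T-t)^((γ-1)+(γ-1)+1)) :=
          mul_le_mul_right (lint_beta_le hγ1' hγ1' htT) _
      _ ≤ ENNReal.ofReal (d * Cc (γ-1) (γ-1) * T^γ * (T-t)^(γ-1)) := by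
          rw [← ENNReal.ofReal_mul hd]
          apply ENNReal.ofReal_le_ofReal
          have h2 : (γ-1)+(γ-1)+1 = γ + (γ-1) := by ring
          rw [h2, Real.rpow_add (by linarith : 0 < T - t)]
          have hg : (0:ℝ) ≤ (T-t)^(γ-1) := Real.rpow_nonneg (by linarith) _
          have h4 : (T-t)^γ ≤ T^γ :=
            Real.rpow_le_rpow (by linarith) (by linarith) hγ0.le
          have h5 : (T-t)^γ * (T-t)^(γ-1) ≤ T^γ * (T-t)^(γ-1) :=
            mul_le_mul_of_nonneg_right h4 hg
          calc d * (Cc (γ-1) (γ-1) * ((T-t)^γ * (T-t)^(γ-1)))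
              ≤ d * (Cc (γ-1) (γ-1) * (T^γ * (T-t)^(γ-1))) :=
                mul_le_mul_of_nonneg_left
                  (mul_le_mul_of_nonneg_left h5 (Cc_nonneg hγ1' hγ1')) hd
            _ = d * Cc (γ-1) (γ-1) * T^γ * (T-t)^(γ-1) := by ring
  -- term 2 : the iterated integral, via Fubini
  have hterm2 : ∫⁻ s in Ioc t T, ENNReal.ofReal ((s-t)^(γ-1)) *
        (ENNReal.ofReal D * ∫⁻ u in Ioc s T, ENNReal.ofReal ((u-s)^e) * φ u)
      ≤ ENNReal.ofReal (D * Cc (γ-1) e) *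
          ∫⁻ u in Ioc t T, ENNReal.ofReal ((u-t)^(γ+e)) * φ u := by
    have h1 : ∀ s : ℝ, ENNReal.ofReal ((s-t)^(γ-1)) *
          (ENNReal.ofReal D * ∫⁻ u in Ioc s T, ENNReal.ofReal ((u-s)^e) * φ u)
        = ENNReal.ofReal D * (ENNReal.ofReal ((s-t)^(γ-1)) *
            ∫⁻ u in Ioc s T, ENNReal.ofReal ((u-s)^e) * φ u) := fun s => by ring
    simp_rw [h1]
    rw [lintegral_const_mul' _ _ ENNReal.ofReal_ne_top]
    have hswap : ∫⁻ s in Ioc t T, ENNReal.ofReal ((s-t)^(γ-1)) *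
          ∫⁻ u in Ioc s T, ENNReal.ofReal ((u-s)^e) * φ u
        = ∫⁻ u in Ioc t T, ∫⁻ s in Ioo t u,
            ENNReal.ofReal ((s-t)^(γ-1)) * (ENNReal.ofReal ((u-s)^e) * φ u) := by
      apply lint_swap
      · fun_prop
      · fun_prop
    rw [hswap]
    have hinner : ∀ u ∈ Ioc t T, (∫⁻ s in Ioo t u,
          ENNReal.ofReal ((s-t)^(γ-1)) * (ENNReal.ofReal ((u-s)^e) * φ u))
        ≤ ENNReal.ofReal (Cc (γ-1) e * (u-t)^(γ+e)) * φ u := by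
      intro u hu
      have h2 : ∀ s : ℝ, ENNReal.ofReal ((s-t)^(γ-1)) * (ENNReal.ofReal ((u-s)^e) * φ u)
          = ENNReal.ofReal ((s-t)^(γ-1)) * ENNReal.ofReal ((u-s)^e) * φ u := fun s => by ring
      simp_rw [h2]
      rw [lintegral_mul_const _ (by fun_prop)]
      apply mul_le_mul_left
      calc ∫⁻ s in Ioo t u, ENNReal.ofReal ((s-t)^(γ-1)) * ENNReal.ofReal ((u-s)^e)
          ≤ ∫⁻ s in Ioc t u, ENNReal.ofReal ((s-t)^(γ-1)) * ENNReal.ofReal ((u-s)^e) :=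
            lintegral_mono_set Ioo_subset_Ioc_self
        _ ≤ ENNReal.ofReal (Cc (γ-1) e * (u-t)^((γ-1)+e+1)) := lint_beta_le hγ1' he hu.1
        _ = ENNReal.ofReal (Cc (γ-1) e * (u-t)^(γ+e)) := by rw [show (γ-1)+e+1 = γ+e by ring]
    calc ENNReal.ofReal D * ∫⁻ u in Ioc t T, ∫⁻ s in Ioo t u,
            ENNReal.ofReal ((s-t)^(γ-1)) * (ENNReal.ofReal ((u-s)^e) * φ u)
        ≤ ENNReal.ofReal D * ∫⁻ u in Ioc t T,
            ENNReal.ofReal (Cc (γ-1) e * (u-t)^(γ+e)) * φ u := by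
          apply mul_le_mul_right
          apply setLIntegral_mono' measurableSet_Ioc hinner
      _ = ENNReal.ofReal (D * Cc (γ-1) e) *
            ∫⁻ u in Ioc t T, ENNReal.ofReal ((u-t)^(γ+e)) * φ u := by
          have h3 : ∀ u : ℝ, ENNReal.ofReal (Cc (γ-1) e * (u-t)^(γ+e)) * φ u
              = ENNReal.ofReal (Cc (γ-1) e) * (ENNReal.ofReal ((u-t)^(γ+e)) * φ u) := fun u => by
            rw [ENNReal.ofReal_mul (Cc_nonneg hγ1' he)]; ring
          simp_rw [h3]
          rw [lintegral_const_mul' _ _ ENNReal.ofReal_ne_top,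
            ENNReal.ofReal_mul hD, mul_assoc]
    -- done
  calc φ t ≤ ENNReal.ofReal (c * (T-t)^(γ-1)) +
        ENNReal.ofReal K' * ∫⁻ s in Ioc t T, ENNReal.ofReal ((s-t)^(γ-1)) * φ s := hkey
    _ ≤ ENNReal.ofReal (c * (T-t)^(γ-1)) +
        ENNReal.ofReal K' * ∫⁻ s in Ioc t T, ENNReal.ofReal ((s-t)^(γ-1)) *
          (ENNReal.ofReal (d * (T-s)^(γ-1)) +
            ENNReal.ofReal D * ∫⁻ u in Ioc s T, ENNReal.ofReal ((u-s)^e) * φ u) := by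
        apply add_le_add_right
        apply mul_le_mul_right
        apply lintegral_mono_ae
        filter_upwards [claim'] with s hs
        exact mul_le_mul_right hs _
    _ = ENNReal.ofReal (c * (T-t)^(γ-1)) + ENNReal.ofReal K' *
          ((∫⁻ s in Ioc t T, ENNReal.ofReal ((s-t)^(γ-1)) * ENNReal.ofReal (d * (T-s)^(γ-1)))
          + ∫⁻ s in Ioc t T, ENNReal.ofReal ((s-t)^(γ-1)) *
              (ENNReal.ofReal D * ∫⁻ u in Ioc s T, ENNReal.ofReal ((u-s)^e) * φ u)) := by
        congr 1
        congr 1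
        simp_rw [mul_add]
        rw [lintegral_add_left (by fun_prop)]
    _ ≤ ENNReal.ofReal (c * (T-t)^(γ-1)) + ENNReal.ofReal K' *
          (ENNReal.ofReal (d * Cc (γ-1) (γ-1) * T^γ * (T-t)^(γ-1))
          + ENNReal.ofReal (D * Cc (γ-1) e) *
              ∫⁻ u in Ioc t T, ENNReal.ofReal ((u-t)^(γ+e)) * φ u) :=
        add_le_add_right (mul_le_mul_right (add_le_add hterm1 hterm2) _) _
    _ ≤ ENNReal.ofReal ((c + K' * d * Cc (γ-1) (γ-1) * T^γ) * (T-t)^(γ-1)) +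
        ENNReal.ofReal (K' * D * Cc (γ-1) e) *
          ∫⁻ s in Ioc t T, ENNReal.ofReal ((s-t)^(γ+e)) * φ s := by
        have hCc : 0 ≤ Cc (γ-1) (γ-1) := Cc_nonneg hγ1' hγ1'
        have hg : 0 ≤ (T-t)^(γ-1) := Real.rpow_nonneg (by linarith) _
        rw [mul_add, ← add_assoc]
        apply add_le_add
        · rw [← ENNReal.ofReal_mul hK',
            ← ENNReal.ofReal_add (mul_nonneg hc hg)
              (mul_nonneg hK' (mul_nonneg (mul_nonneg (mul_nonneg hd hCc)
                (Real.rpow_nonneg hT.le γ)) hg))]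
          exact ENNReal.ofReal_le_ofReal (le_of_eq (by ring))
        · rw [← mul_assoc, ← ENNReal.ofReal_mul hK',
            show K' * (D * Cc (γ-1) e) = K' * D * Cc (γ-1) e from (mul_assoc _ _ _).symm]

lemma stepB {T γ : ℝ} (hT : 0 < T) (hγ0 : 0 < γ) (hγ1 : γ < 1)
    (φ : ℝ → ℝ≥0∞) (hφ : Measurable φ)
    {c' D' eb : ℝ} (hc' : 0 ≤ c') (hD' : 0 ≤ D') (heb : 0 ≤ eb)
    (key : ∀ᵐ t ∂(volume.restrict (Ioo (0:ℝ) T)),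
      φ t ≤ ENNReal.ofReal (c' * (T-t)^(γ-1)) +
        ENNReal.ofReal D' * ∫⁻ s in Ioc t T, ENNReal.ofReal ((s-t)^eb) * φ s)
    {d E e : ℝ} (hd : 0 ≤ d) (hE : 0 ≤ E) (he : 0 ≤ e)
    (claim : ∀ᵐ t ∂(volume.restrict (Ioo (0:ℝ) T)),
      φ t ≤ ENNReal.ofReal (d * (T-t)^(γ-1)) +
        ENNReal.ofReal E * ∫⁻ s in Ioc t T, ENNReal.ofReal ((s-t)^e) * φ s) :
    ∀ᵐ t ∂(volume.restrict (Ioo (0:ℝ) T)),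
      φ t ≤ ENNReal.ofReal ((d + E * (c'*T^e*T/γ)) * (T-t)^(γ-1)) +
        ENNReal.ofReal (E * (D'/(e+1))) *
          ∫⁻ s in Ioc t T, ENNReal.ofReal ((s-t)^(e+eb+1)) * φ s := by
  have hγ1' : -1 < γ - 1 := by linarith
  have hTe : (0:ℝ) ≤ T^e := Real.rpow_nonneg hT.le e
  filter_upwards [claim, ae_restrict_mem measurableSet_Ioo] with t hclaim ht
  obtain ⟨ht0, htT⟩ := ht
  have hg : (0:ℝ) ≤ (T-t)^(γ-1) := Real.rpow_nonneg (by linarith) _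
  have key' : ∀ᵐ s ∂(volume.restrict (Ioc t T)),
      φ s ≤ ENNReal.ofReal (c' * (T-s)^(γ-1)) +
        ENNReal.ofReal D' * ∫⁻ u in Ioc s T, ENNReal.ofReal ((u-s)^eb) * φ u := by
    rw [← Measure.restrict_congr_set (Ioo_ae_eq_Ioc (a := t) (b := T))]
    exact ae_restrict_of_ae_restrict_of_subset (Ioo_subset_Ioo_left ht0.le) key
  -- term 1
  have hterm1 : ∫⁻ s in Ioc t T,
        ENNReal.ofReal ((s-t)^e) * ENNReal.ofReal (c' * (T-s)^(γ-1))
      ≤ ENNReal.ofReal (c'*T^e*T/γ * (T-t)^(γ-1)) := by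
    have hpt : ∀ s ∈ Ioc t T, ENNReal.ofReal ((s-t)^e) * ENNReal.ofReal (c' * (T-s)^(γ-1))
        ≤ ENNReal.ofReal (c'*T^e) * ENNReal.ofReal ((T-s)^(γ-1)) := by
      intro s hs
      have h1 : (s-t)^e ≤ T^e :=
        Real.rpow_le_rpow (by linarith [hs.1]) (by linarith [hs.2, ht0]) he
      have hgs : (0:ℝ) ≤ (T-s)^(γ-1) := Real.rpow_nonneg (by linarith [hs.2]) _
      rw [← ENNReal.ofReal_mul (Real.rpow_nonneg (by linarith [hs.1]) _),
        ← ENNReal.ofReal_mul (mul_nonneg hc' hTe)]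
      apply ENNReal.ofReal_le_ofReal
      have h2 : c' * (T-s)^(γ-1) * (s-t)^e ≤ c' * (T-s)^(γ-1) * T^e :=
        mul_le_mul_of_nonneg_left h1 (mul_nonneg hc' hgs)
      calc (s-t)^e * (c' * (T-s)^(γ-1)) = c' * (T-s)^(γ-1) * (s-t)^e := by ring
        _ ≤ c' * (T-s)^(γ-1) * T^e := h2
        _ = c' * T^e * (T-s)^(γ-1) := by ring
    calc ∫⁻ s in Ioc t T, ENNReal.ofReal ((s-t)^e) * ENNReal.ofReal (c' * (T-s)^(γ-1))
        ≤ ∫⁻ s in Ioc t T, ENNReal.ofReal (c'*T^e) * ENNReal.ofReal ((T-s)^(γ-1)) :=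
          setLIntegral_mono' measurableSet_Ioc hpt
      _ = ENNReal.ofReal (c'*T^e) * ENNReal.ofReal ((T-t)^((γ-1)+1)/((γ-1)+1)) := by
          rw [lintegral_const_mul' _ _ ENNReal.ofReal_ne_top, lint_rpow_right hγ1' htT.le]
      _ ≤ ENNReal.ofReal (c'*T^e*T/γ * (T-t)^(γ-1)) := by
          rw [← ENNReal.ofReal_mul (mul_nonneg hc' hTe)]
          apply ENNReal.ofReal_le_ofReal
          rw [show (γ-1)+1 = γ by ring]
          have hsplit := Real.rpow_add (show (0:ℝ) < T-t by linarith) 1 (γ-1)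
          rw [Real.rpow_one, show (1:ℝ)+(γ-1) = γ by ring] at hsplit
          rw [hsplit]
          have h6 : (T-t) * (T-t)^(γ-1) ≤ T * (T-t)^(γ-1) :=
            mul_le_mul_of_nonneg_right (by linarith) hg
          calc c'*T^e * ((T-t) * (T-t)^(γ-1) / γ)
              = (c'*T^e/γ) * ((T-t) * (T-t)^(γ-1)) := by ring
            _ ≤ (c'*T^e/γ) * (T * (T-t)^(γ-1)) :=
                mul_le_mul_of_nonneg_left h6
                  (div_nonneg (mul_nonneg hc' hTe) hγ0.le)
            _ = c'*T^e*T/γ * (T-t)^(γ-1) := by ring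
  -- term 2
  have hterm2 : ∫⁻ s in Ioc t T, ENNReal.ofReal ((s-t)^e) *
        (ENNReal.ofReal D' * ∫⁻ u in Ioc s T, ENNReal.ofReal ((u-s)^eb) * φ u)
      ≤ ENNReal.ofReal (D'/(e+1)) *
          ∫⁻ u in Ioc t T, ENNReal.ofReal ((u-t)^(e+eb+1)) * φ u := by
    have h1 : ∀ s : ℝ, ENNReal.ofReal ((s-t)^e) *
          (ENNReal.ofReal D' * ∫⁻ u in Ioc s T, ENNReal.ofReal ((u-s)^eb) * φ u)
        = ENNReal.ofReal D' * (ENNReal.ofReal ((s-t)^e) *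
            ∫⁻ u in Ioc s T, ENNReal.ofReal ((u-s)^eb) * φ u) := fun s => by ring
    simp_rw [h1]
    rw [lintegral_const_mul' _ _ ENNReal.ofReal_ne_top]
    rw [lint_swap _ (by fun_prop) _ (by fun_prop)]
    have hinner : ∀ u ∈ Ioc t T, (∫⁻ s in Ioo t u,
          ENNReal.ofReal ((s-t)^e) * (ENNReal.ofReal ((u-s)^eb) * φ u))
        ≤ ENNReal.ofReal (1/(e+1)) * (ENNReal.ofReal ((u-t)^(e+eb+1)) * φ u) := by
      intro u hu
      have hut : (0:ℝ) < u - t := by linarith [hu.1]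
      have h2 : ∀ s : ℝ, ENNReal.ofReal ((s-t)^e) * (ENNReal.ofReal ((u-s)^eb) * φ u)
          = ENNReal.ofReal ((s-t)^e) * ENNReal.ofReal ((u-s)^eb) * φ u := fun s => by ring
      simp_rw [h2]
      rw [lintegral_mul_const _ (by fun_prop)]
      have h3 : (∫⁻ s in Ioo t u, ENNReal.ofReal ((s-t)^e) * ENNReal.ofReal ((u-s)^eb))
          ≤ ENNReal.ofReal ((u-t)^(e+1)/(e+1) * (u-t)^eb) := by
        calc ∫⁻ s in Ioo t u, ENNReal.ofReal ((s-t)^e) * ENNReal.ofReal ((u-s)^eb)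
            ≤ ∫⁻ s in Ioo t u, ENNReal.ofReal ((s-t)^e) * ENNReal.ofReal ((u-t)^eb) :=
              setLIntegral_mono' measurableSet_Ioo (fun s hs => mul_le_mul_right
                (ENNReal.ofReal_le_ofReal (Real.rpow_le_rpow
                  (by linarith [hs.2]) (by linarith [hs.1]) heb)) _)
          _ = (∫⁻ s in Ioo t u, ENNReal.ofReal ((s-t)^e)) * ENNReal.ofReal ((u-t)^eb) :=
              lintegral_mul_const _ (by fun_prop)
          _ ≤ ENNReal.ofReal ((u-t)^(e+1)/(e+1)) * ENNReal.ofReal ((u-t)^eb) := by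
              apply mul_le_mul_left
              calc ∫⁻ s in Ioo t u, ENNReal.ofReal ((s-t)^e)
                  ≤ ∫⁻ s in Ioc t u, ENNReal.ofReal ((s-t)^e) :=
                    lintegral_mono_set Ioo_subset_Ioc_self
                _ = ENNReal.ofReal ((u-t)^(e+1)/(e+1)) :=
                    lint_rpow_left (by linarith) (by linarith [hu.1] : t ≤ u)
          _ = ENNReal.ofReal ((u-t)^(e+1)/(e+1) * (u-t)^eb) :=
              (ENNReal.ofReal_mul (div_nonneg (Real.rpow_nonneg hut.le _)
                (by linarith))).symm
      calc (∫⁻ s in Ioo t u, ENNReal.ofReal ((s-t)^e) * ENNReal.ofReal ((u-s)^eb)) * φ u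
          ≤ ENNReal.ofReal ((u-t)^(e+1)/(e+1) * (u-t)^eb) * φ u := mul_le_mul_left h3 _
        _ = ENNReal.ofReal (1/(e+1)) * (ENNReal.ofReal ((u-t)^(e+eb+1)) * φ u) := by
            rw [← mul_assoc, ← ENNReal.ofReal_mul (by positivity)]
            congr 2
            rw [show e+eb+1 = (e+1)+eb by ring, Real.rpow_add hut (e+1) eb, ← mul_assoc,
              one_div, inv_mul_eq_div]
    calc ENNReal.ofReal D' * ∫⁻ u in Ioc t T, ∫⁻ s in Ioo t u,
            ENNReal.ofReal ((s-t)^e) * (ENNReal.ofReal ((u-s)^eb) * φ u)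
        ≤ ENNReal.ofReal D' * ∫⁻ u in Ioc t T,
            ENNReal.ofReal (1/(e+1)) * (ENNReal.ofReal ((u-t)^(e+eb+1)) * φ u) :=
          mul_le_mul_right (setLIntegral_mono' measurableSet_Ioc hinner) _
      _ = ENNReal.ofReal (D'/(e+1)) *
            ∫⁻ u in Ioc t T, ENNReal.ofReal ((u-t)^(e+eb+1)) * φ u := by
          rw [lintegral_const_mul' _ _ ENNReal.ofReal_ne_top, ← mul_assoc,
            ← ENNReal.ofReal_mul hD', show D' * (1/(e+1)) = D'/(e+1) by ring]
  -- assembly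
  calc φ t ≤ ENNReal.ofReal (d * (T-t)^(γ-1)) +
        ENNReal.ofReal E * ∫⁻ s in Ioc t T, ENNReal.ofReal ((s-t)^e) * φ s := hclaim
    _ ≤ ENNReal.ofReal (d * (T-t)^(γ-1)) +
        ENNReal.ofReal E * ∫⁻ s in Ioc t T, ENNReal.ofReal ((s-t)^e) *
          (ENNReal.ofReal (c' * (T-s)^(γ-1)) +
            ENNReal.ofReal D' * ∫⁻ u in Ioc s T, ENNReal.ofReal ((u-s)^eb) * φ u) := by
        apply add_le_add_right
        apply mul_le_mul_right
        apply lintegral_mono_ae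
        filter_upwards [key'] with s hs
        exact mul_le_mul_right hs _
    _ = ENNReal.ofReal (d * (T-t)^(γ-1)) + ENNReal.ofReal E *
          ((∫⁻ s in Ioc t T, ENNReal.ofReal ((s-t)^e) * ENNReal.ofReal (c' * (T-s)^(γ-1)))
          + ∫⁻ s in Ioc t T, ENNReal.ofReal ((s-t)^e) *
              (ENNReal.ofReal D' * ∫⁻ u in Ioc s T, ENNReal.ofReal ((u-s)^eb) * φ u)) := by
        congr 1
        congr 1
        simp_rw [mul_add]
        rw [lintegral_add_left (by fun_prop)]
    _ ≤ ENNReal.ofReal (d * (T-t)^(γ-1)) + ENNReal.ofReal E *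
          (ENNReal.ofReal (c'*T^e*T/γ * (T-t)^(γ-1))
          + ENNReal.ofReal (D'/(e+1)) *
              ∫⁻ u in Ioc t T, ENNReal.ofReal ((u-t)^(e+eb+1)) * φ u) :=
        add_le_add_right (mul_le_mul_right (add_le_add hterm1 hterm2) _) _
    _ ≤ ENNReal.ofReal ((d + E * (c'*T^e*T/γ)) * (T-t)^(γ-1)) +
        ENNReal.ofReal (E * (D'/(e+1))) *
          ∫⁻ s in Ioc t T, ENNReal.ofReal ((s-t)^(e+eb+1)) * φ s := by
        rw [mul_add, ← add_assoc]
        apply add_le_add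
        · rw [← ENNReal.ofReal_mul hE,
            ← ENNReal.ofReal_add (mul_nonneg hd hg)
              (mul_nonneg hE (mul_nonneg (div_nonneg
                (mul_nonneg (mul_nonneg hc' hTe) hT.le) hγ0.le) hg))]
          exact ENNReal.ofReal_le_ofReal (le_of_eq (by ring))
        · rw [← mul_assoc, ← ENNReal.ofReal_mul hE]

noncomputable def Aseq (g K CT : ℝ) : ℕ → ℝ
  | 0 => g
  | k+1 => g + K * Aseq g K CT k * CT

noncomputable def Bseq (γ K : ℝ) : ℕ → ℝ
  | 0 => K
  | k+1 => K * Bseq γ K k * Cc (γ-1) ((k+1 : ℝ)*γ-1)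

noncomputable def Eseq (Bb eb : ℝ) : ℕ → ℝ
  | 0 => Bb
  | m+1 => Eseq Bb eb m * (Bb/((eb + (m:ℝ)*(eb+1)) + 1))

noncomputable def Apseq (Ab Bb eb T γ : ℝ) : ℕ → ℝ
  | 0 => Ab
  | m+1 => Apseq Ab Bb eb T γ m + Eseq Bb eb m * (Ab * T^(eb + (m:ℝ)*(eb+1)) * T / γ)

lemma Aseq_pos {g K CT : ℝ} (hg : 0 < g) (hK : 0 ≤ K) (hCT : 0 ≤ CT) :
    ∀ k, 0 < Aseq g K CT k := by
  intro k
  induction k with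
  | zero => simpa [Aseq] using hg
  | succ k ih =>
    have : 0 ≤ K * Aseq g K CT k * CT := mul_nonneg (mul_nonneg hK ih.le) hCT
    simp only [Aseq]; linarith

lemma Bseq_nonneg {γ K : ℝ} (hγ0 : 0 < γ) (hγ1 : γ < 1) (hK : 0 ≤ K) :
    ∀ k, 0 ≤ Bseq γ K k := by
  intro k
  induction k with
  | zero => simpa [Bseq] using hK
  | succ k ih =>
    simp only [Bseq]
    apply mul_nonneg (mul_nonneg hK ih)
    apply Cc_nonneg (by linarith)
    have hk : (0:ℝ) ≤ (k:ℝ) := Nat.cast_nonneg k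
    nlinarith

lemma Eseq_nonneg {Bb eb : ℝ} (hBb : 0 ≤ Bb) (heb : 0 ≤ eb) :
    ∀ m, 0 ≤ Eseq Bb eb m := by
  intro m
  induction m with
  | zero => simpa [Eseq] using hBb
  | succ m ih =>
    simp only [Eseq]
    apply mul_nonneg ih
    apply div_nonneg hBb
    have hm : (0:ℝ) ≤ (m:ℝ) := Nat.cast_nonneg m
    nlinarith

lemma Eseq_le {Bb eb T : ℝ} (hT : 0 < T) (hBb : 0 ≤ Bb) (heb : 0 ≤ eb) :
    ∀ m, Eseq Bb eb m * T^(eb + (m:ℝ)*(eb+1))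
      ≤ (Bb * T^eb) * (Bb * T^eb * T)^m / (m.factorial) := by
  have hTe : (0:ℝ) ≤ T^eb := Real.rpow_nonneg hT.le eb
  have hx : (0:ℝ) ≤ Bb * T^eb * T := mul_nonneg (mul_nonneg hBb hTe) hT.le
  intro m
  induction m with
  | zero =>
    simp only [Eseq, Nat.cast_zero, zero_mul, add_zero, pow_zero, Nat.factorial_zero,
      Nat.cast_one, mul_one]
    rw [div_one]
  | succ m ih =>
    have hem : (0:ℝ) ≤ eb + (m:ℝ)*(eb+1) := by
      have hm : (0:ℝ) ≤ (m:ℝ) := Nat.cast_nonneg m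
      nlinarith
    have hmem : ((m:ℝ)) ≤ eb + (m:ℝ)*(eb+1) := by
      have hm : (0:ℝ) ≤ (m:ℝ) := Nat.cast_nonneg m
      nlinarith
    have hee : eb + ((m+1:ℕ):ℝ)*(eb+1) = (eb + (m:ℝ)*(eb+1)) + (eb+1) := by
      push_cast; ring
    have hT1 : T^(eb+(1:ℝ)) = T^eb * T := by
      rw [Real.rpow_add hT eb 1, Real.rpow_one]
    have hfac : (((m+1).factorial : ℕ):ℝ) = ((m:ℝ)+1) * ((m.factorial : ℕ):ℝ) := by
      rw [Nat.factorial_succ]; push_cast; ring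
    have hfacpos : (0:ℝ) < ((m.factorial : ℕ):ℝ) := by
      exact_mod_cast Nat.factorial_pos m
    calc Eseq Bb eb (m+1) * T^(eb + ((m+1:ℕ):ℝ)*(eb+1))
        = (Eseq Bb eb m * T^(eb + (m:ℝ)*(eb+1))) *
            ((Bb * T^eb * T)/((eb + (m:ℝ)*(eb+1)) + 1)) := by
          simp only [Eseq]
          rw [hee, Real.rpow_add hT, Real.rpow_add hT eb 1, Real.rpow_one]
          ring
      _ ≤ ((Bb * T^eb) * (Bb * T^eb * T)^m / (m.factorial)) *
            ((Bb * T^eb * T)/((m:ℝ) + 1)) := by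
          apply mul_le_mul ih
          · apply div_le_div_of_nonneg_left hx (by positivity)
            linarith
          · apply div_nonneg hx (by linarith)
          · positivity
      _ = (Bb * T^eb) * (Bb * T^eb * T)^(m+1) / ((m+1).factorial) := by
          rw [pow_succ, hfac]
          field_simp

lemma Apseq_nonneg {Ab Bb eb T γ : ℝ} (hAb : 0 ≤ Ab) (hBb : 0 ≤ Bb) (heb : 0 ≤ eb)
    (hT : 0 < T) (hγ0 : 0 < γ) : ∀ m, 0 ≤ Apseq Ab Bb eb T γ m := by
  intro m
  induction m with
  | zero => simpa [Apseq] using hAb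
  | succ m ih =>
    simp only [Apseq]
    have h1 : 0 ≤ Eseq Bb eb m * (Ab * T^(eb + (m:ℝ)*(eb+1)) * T / γ) :=
      mul_nonneg (Eseq_nonneg hBb heb m)
        (div_nonneg (mul_nonneg (mul_nonneg hAb (Real.rpow_nonneg hT.le _)) hT.le) hγ0.le)
    linarith

lemma Apseq_le {Ab Bb eb T γ : ℝ} (hAb : 0 ≤ Ab) (hBb : 0 ≤ Bb) (heb : 0 ≤ eb)
    (hT : 0 < T) (hγ0 : 0 < γ) :
    ∀ m, Apseq Ab Bb eb T γ m
      ≤ Ab + (Ab*T/γ) * ((Bb*T^eb) * Real.exp (Bb*T^eb*T)) := by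
  have hTe : (0:ℝ) ≤ T^eb := Real.rpow_nonneg hT.le eb
  have hx : (0:ℝ) ≤ Bb * T^eb * T := mul_nonneg (mul_nonneg hBb hTe) hT.le
  have hco : (0:ℝ) ≤ Ab*T/γ := div_nonneg (mul_nonneg hAb hT.le) hγ0.le
  have key : ∀ m, Apseq Ab Bb eb T γ m
      ≤ Ab + (Ab*T/γ) * ((Bb*T^eb) *
          ∑ j ∈ Finset.range m, (Bb*T^eb*T)^j / (j.factorial : ℝ)) := by
    intro m
    induction m with
    | zero => simp [Apseq]
    | succ m ih =>
      simp only [Apseq]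
      rw [Finset.sum_range_succ]
      have h2 : Eseq Bb eb m * (Ab * T^(eb + (m:ℝ)*(eb+1)) * T / γ)
          ≤ (Ab*T/γ) * ((Bb*T^eb) * ((Bb*T^eb*T)^m / (m.factorial : ℝ))) := by
        have h3 : Eseq Bb eb m * T^(eb + (m:ℝ)*(eb+1))
            ≤ (Bb * T^eb) * (Bb * T^eb * T)^m / (m.factorial) := Eseq_le hT hBb heb m
        calc Eseq Bb eb m * (Ab * T^(eb + (m:ℝ)*(eb+1)) * T / γ)
            = (Ab*T/γ) * (Eseq Bb eb m * T^(eb + (m:ℝ)*(eb+1))) := by ring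
          _ ≤ (Ab*T/γ) * ((Bb * T^eb) * (Bb * T^eb * T)^m / (m.factorial)) :=
              mul_le_mul_of_nonneg_left h3 hco
          _ = (Ab*T/γ) * ((Bb*T^eb) * ((Bb*T^eb*T)^m / (m.factorial : ℝ))) := by ring
      calc Apseq Ab Bb eb T γ m + Eseq Bb eb m * (Ab * T^(eb + (m:ℝ)*(eb+1)) * T / γ)
          ≤ (Ab + (Ab*T/γ) * ((Bb*T^eb) *
              ∑ j ∈ Finset.range m, (Bb*T^eb*T)^j / (j.factorial : ℝ)))
            + (Ab*T/γ) * ((Bb*T^eb) * ((Bb*T^eb*T)^m / (m.factorial : ℝ))) :=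
            add_le_add ih h2
        _ = Ab + (Ab*T/γ) * ((Bb*T^eb) *
              ((∑ j ∈ Finset.range m, (Bb*T^eb*T)^j / (j.factorial : ℝ))
                + (Bb*T^eb*T)^m / (m.factorial : ℝ))) := by ring
  intro m
  calc Apseq Ab Bb eb T γ m
      ≤ Ab + (Ab*T/γ) * ((Bb*T^eb) *
          ∑ j ∈ Finset.range m, (Bb*T^eb*T)^j / (j.factorial : ℝ)) := key m
    _ ≤ Ab + (Ab*T/γ) * ((Bb*T^eb) * Real.exp (Bb*T^eb*T)) := by
        apply add_le_add_right
        apply mul_le_mul_of_nonneg_left _ hco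
        apply mul_le_mul_of_nonneg_left _ (mul_nonneg hBb hTe)
        exact Real.sum_le_exp_of_nonneg hx m

/-- Let `r ∈ (1, 1/(1-γ))`, `a ∈ L^∞(0,T;ℝ^{n×n})` with `‖a‖_{L^∞} ≤ c₂`,
`M ∈ L^∞(0,T;ℝ^{n×n})` with `‖M(t)‖ ≤ L` a.e., and `v ∈ ℝⁿ` with `‖v‖ ≤ c₁`. Then the
solution `p ∈ L^r(0,T;ℝⁿ)` of the backward integral equation satisfies
`‖p(t)‖ ≤ C c₁ (T-t)^(γ-1)` for a.e. `t ∈ (0,T)`, where `C > 0` depends only on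
`c₂, L, γ, T`. -/
theorem stmt_17 {n : ℕ} (γ T c₂ L : ℝ) (hγ : γ ∈ Ioo (0:ℝ) 1) (hT : 0 < T)
    (hc₂ : 0 ≤ c₂) (hL : 0 < L) :
    ∃ C : ℝ, 0 < C ∧
      ∀ r : ℝ, r ∈ Ioo 1 (1 / (1 - γ)) →
      ∀ a M : ℝ → Mat n, Measurable a → Measurable M →
        (∀ t ∈ Icc (0:ℝ) T, ‖a t‖ ≤ c₂) →
        (∀ t ∈ Icc (0:ℝ) T, ‖M t‖ ≤ L) →
      ∀ v : Vec n, ∀ c₁ : ℝ, ‖v‖ ≤ c₁ →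
      ∀ p : ℝ → Vec n,
        MemLp p (ENNReal.ofReal r) (volume.restrict (Ioc 0 T)) →
        (∀ᵐ t ∂(volume.restrict (Ioo (0:ℝ) T)),
          p t = ((T - t) ^ (γ - 1) / Real.Gamma γ) • v +
            ∫ s in t..T, ((s - t) ^ (γ - 1) / Real.Gamma γ) • mvT (a s) (mv (M s) (p s))) →
        ∀ᵐ t ∂(volume.restrict (Ioo (0:ℝ) T)),
          ‖p t‖ ≤ C * c₁ * (T - t) ^ (γ - 1) := by
  obtain ⟨hγ0, hγ1⟩ := hγ
  have hΓ : 0 < Real.Gamma γ := Real.Gamma_pos_of_pos hγ0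
  have hγ1' : (-1:ℝ) < γ - 1 := by linarith
  set K : ℝ := c₂ * L / Real.Gamma γ with hKdef
  have hK : 0 ≤ K := div_nonneg (mul_nonneg hc₂ hL.le) hΓ.le
  have hCg : 0 ≤ Cc (γ-1) (γ-1) := Cc_nonneg hγ1' hγ1'
  have hg0 : (0:ℝ) < 1/Real.Gamma γ := by positivity
  have hCT : (0:ℝ) ≤ Cc (γ-1) (γ-1) * T^γ :=
    mul_nonneg hCg (Real.rpow_nonneg hT.le γ)
  set k₀ : ℕ := ⌈1/γ⌉₊ with hk0def
  set eb : ℝ := ((k₀:ℝ)+1)*γ - 1 with hebdef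
  have heb : 0 ≤ eb := by
    have h1 : (1/γ : ℝ) ≤ (k₀:ℝ) := Nat.le_ceil _
    have h2 : (1/γ) * γ = 1 := one_div_mul_cancel (ne_of_gt hγ0)
    have h3 := mul_le_mul_of_nonneg_right h1 hγ0.le
    rw [hebdef]; nlinarith
  set Ab : ℝ := Aseq (1/Real.Gamma γ) K (Cc (γ-1) (γ-1) * T^γ) k₀ with hAbdef
  set Bb : ℝ := Bseq γ K k₀ with hBbdef
  have hAb : 0 < Ab := Aseq_pos hg0 hK hCT k₀
  have hBb : 0 ≤ Bb := Bseq_nonneg hγ0 hγ1 hK k₀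
  set Cfin : ℝ := Ab + (Ab*T/γ) * ((Bb*T^eb) * Real.exp (Bb*T^eb*T)) with hCdef
  have hCfin : 0 < Cfin := by
    have h4 : 0 ≤ (Ab*T/γ) * ((Bb*T^eb) * Real.exp (Bb*T^eb*T)) := by
      have := Real.rpow_nonneg hT.le eb
      have := Real.exp_nonneg (Bb*T^eb*T)
      positivity
    rw [hCdef]; linarith
  refine ⟨Cfin, hCfin, ?_⟩
  intro r hr a M ha hM haC hMC v c₁ hv p hp heq
  have hc₁ : 0 ≤ c₁ := le_trans (norm_nonneg v) hv
  -- measurable representative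
  have hps : AEStronglyMeasurable p (volume.restrict (Ioc 0 T)) := hp.aestronglyMeasurable
  set q : ℝ → Vec n := hps.mk p with hqdef
  have hq : StronglyMeasurable q := hps.stronglyMeasurable_mk
  have hpq : p =ᵐ[volume.restrict (Ioc 0 T)] q := hps.ae_eq_mk
  set φ : ℝ → ℝ≥0∞ := fun s => (‖q s‖₊ : ℝ≥0∞) with hφdef
  have hφ : Measurable φ := hq.measurable.nnnorm.coe_nnreal_ennreal
  have hφp : ∀ᵐ s ∂(volume.restrict (Ioc (0:ℝ) T)), ENNReal.ofReal ‖p s‖ = φ s := by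
    filter_upwards [hpq] with s hs
    rw [hs, ofReal_norm, enorm_eq_nnnorm]
  -- finiteness
  haveI : IsFiniteMeasure (volume.restrict (Ioc (0:ℝ) T)) := by
    constructor
    rw [Measure.restrict_apply_univ]
    simp [Real.volume_Ioc]
  have hint : Integrable q (volume.restrict (Ioc 0 T)) := by
    have h1 : MemLp p 1 (volume.restrict (Ioc 0 T)) :=
      hp.mono_exponent (ENNReal.one_le_ofReal.mpr hr.1.le)
    exact (memLp_one_iff_integrable.mp h1).congr hpq
  have hI : (∫⁻ s in Ioc (0:ℝ) T, φ s) ≠ ⊤ := hint.hasFiniteIntegral.ne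
  -- basic inequality from the integral equation
  have key0 : ∀ᵐ t ∂(volume.restrict (Ioo (0:ℝ) T)),
      φ t ≤ ENNReal.ofReal (c₁ * (1/Real.Gamma γ) * (T-t)^(γ-1)) +
        ENNReal.ofReal K * ∫⁻ s in Ioc t T, ENNReal.ofReal ((s-t)^(γ-1)) * φ s := by
    filter_upwards [heq, ae_restrict_mem measurableSet_Ioo,
      ae_restrict_of_ae_restrict_of_subset Ioo_subset_Ioc_self hφp] with t hteq ht hφt
    obtain ⟨ht0, htT⟩ := ht
    have hg : (0:ℝ) ≤ (T-t)^(γ-1) := Real.rpow_nonneg (by linarith) _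
    have hks : (0:ℝ) ≤ (T-t)^(γ-1)/Real.Gamma γ := div_nonneg hg hΓ.le
    have hpq' : ∀ᵐ s ∂(volume.restrict (Ioc t T)), ENNReal.ofReal ‖p s‖ = φ s :=
      ae_restrict_of_ae_restrict_of_subset (Ioc_subset_Ioc_left ht0.le) hφp
    have hAterm : (‖((T-t)^(γ-1)/Real.Gamma γ) • v‖₊ : ℝ≥0∞)
        ≤ ENNReal.ofReal (c₁ * (1/Real.Gamma γ) * (T-t)^(γ-1)) := by
      rw [← enorm_eq_nnnorm, ← ofReal_norm]
      apply ENNReal.ofReal_le_ofReal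
      rw [norm_smul, Real.norm_eq_abs, abs_of_nonneg hks]
      calc ((T-t)^(γ-1)/Real.Gamma γ) * ‖v‖ ≤ ((T-t)^(γ-1)/Real.Gamma γ) * c₁ :=
            mul_le_mul_of_nonneg_left hv hks
        _ = c₁ * (1/Real.Gamma γ) * (T-t)^(γ-1) := by ring
    have hBterm : (‖∫ s in t..T, ((s - t) ^ (γ - 1) / Real.Gamma γ) •
          mvT (a s) (mv (M s) (p s))‖₊ : ℝ≥0∞)
        ≤ ENNReal.ofReal K * ∫⁻ s in Ioc t T, ENNReal.ofReal ((s-t)^(γ-1)) * φ s := by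
      rw [intervalIntegral.integral_of_le htT.le]
      calc (‖∫ s in Ioc t T, ((s - t) ^ (γ - 1) / Real.Gamma γ) •
              mvT (a s) (mv (M s) (p s))‖₊ : ℝ≥0∞)
          ≤ ∫⁻ s in Ioc t T, (‖((s - t) ^ (γ - 1) / Real.Gamma γ) •
              mvT (a s) (mv (M s) (p s))‖₊ : ℝ≥0∞) :=
            enorm_integral_le_lintegral_enorm _
        _ ≤ ∫⁻ s in Ioc t T, ENNReal.ofReal K * (ENNReal.ofReal ((s-t)^(γ-1)) * φ s) := by
            apply lintegral_mono_ae
            filter_upwards [hpq', ae_restrict_mem measurableSet_Ioc] with s hφs hs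
            have hst : (0:ℝ) ≤ (s-t)^(γ-1) := Real.rpow_nonneg (by linarith [hs.1]) _
            have hks' : (0:ℝ) ≤ (s-t)^(γ-1)/Real.Gamma γ := div_nonneg hst hΓ.le
            rw [← hφs, ← enorm_eq_nnnorm, ← ofReal_norm,
              ← ENNReal.ofReal_mul hst, ← ENNReal.ofReal_mul hK]
            apply ENNReal.ofReal_le_ofReal
            have hsIcc : s ∈ Icc (0:ℝ) T := ⟨by linarith [hs.1], hs.2⟩
            have h1 : ‖mv (M s) (p s)‖ ≤ L * ‖p s‖ :=
              le_trans (norm_mv_le _ _)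
                (mul_le_mul_of_nonneg_right (hMC s hsIcc) (norm_nonneg _))
            have h2 : ‖mvT (a s) (mv (M s) (p s))‖ ≤ c₂ * (L * ‖p s‖) :=
              le_trans (norm_mvT_le _ _)
                (mul_le_mul (haC s hsIcc) h1 (norm_nonneg _) hc₂)
            rw [norm_smul, Real.norm_eq_abs, abs_of_nonneg hks']
            calc ((s-t)^(γ-1)/Real.Gamma γ) * ‖mvT (a s) (mv (M s) (p s))‖
                ≤ ((s-t)^(γ-1)/Real.Gamma γ) * (c₂ * (L * ‖p s‖)) :=
                  mul_le_mul_of_nonneg_left h2 hks'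
              _ = K * ((s-t)^(γ-1) * ‖p s‖) := by rw [hKdef]; ring
        _ = ENNReal.ofReal K * ∫⁻ s in Ioc t T, ENNReal.ofReal ((s-t)^(γ-1)) * φ s :=
            lintegral_const_mul' _ _ ENNReal.ofReal_ne_top
    calc φ t = ENNReal.ofReal ‖p t‖ := hφt.symm
      _ = (‖((T - t) ^ (γ - 1) / Real.Gamma γ) • v +
            ∫ s in t..T, ((s - t) ^ (γ - 1) / Real.Gamma γ) •
              mvT (a s) (mv (M s) (p s))‖₊ : ℝ≥0∞) := by
          rw [hteq, ofReal_norm, enorm_eq_nnnorm]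
      _ ≤ (‖((T - t) ^ (γ - 1) / Real.Gamma γ) • v‖₊ : ℝ≥0∞) +
          (‖∫ s in t..T, ((s - t) ^ (γ - 1) / Real.Gamma γ) •
            mvT (a s) (mv (M s) (p s))‖₊ : ℝ≥0∞) := by
          rw [← ENNReal.coe_add]
          exact ENNReal.coe_le_coe.mpr (nnnorm_add_le _ _)
      _ ≤ _ := add_le_add hAterm hBterm
  -- Phase A iteration
  have hPA : ∀ k : ℕ, ∀ᵐ t ∂(volume.restrict (Ioo (0:ℝ) T)),
      φ t ≤ ENNReal.ofReal (c₁ * Aseq (1/Real.Gamma γ) K (Cc (γ-1) (γ-1) * T^γ) k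
              * (T-t)^(γ-1)) +
        ENNReal.ofReal (Bseq γ K k) *
          ∫⁻ s in Ioc t T, ENNReal.ofReal ((s-t)^(((k:ℝ)+1)*γ-1)) * φ s := by
    intro k
    induction k with
    | zero =>
      simp only [Nat.cast_zero, zero_add, one_mul]
      rw [show Aseq (1/Real.Gamma γ) K (Cc (γ-1) (γ-1) * T^γ) 0 = 1/Real.Gamma γ from rfl,
        show Bseq γ K 0 = K from rfl]
      exact key0
    | succ k ih =>
      have hβk : (-1:ℝ) < ((k:ℝ)+1)*γ-1 := by
        have hk : (0:ℝ) ≤ (k:ℝ) := Nat.cast_nonneg k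
        nlinarith
      have hstep := stepA hT hγ0 hγ1 φ hφ
        (mul_nonneg hc₁ hg0.le) hK key0
        (mul_nonneg hc₁ (Aseq_pos hg0 hK hCT k).le)
        (Bseq_nonneg hγ0 hγ1 hK k) hβk ih
      have hc3 : c₁ * (1/Real.Gamma γ) +
            K * (c₁ * Aseq (1/Real.Gamma γ) K (Cc (γ-1) (γ-1) * T^γ) k)
              * Cc (γ-1) (γ-1) * T^γ
          = c₁ * Aseq (1/Real.Gamma γ) K (Cc (γ-1) (γ-1) * T^γ) (k+1) := by
        rw [show Aseq (1/Real.Gamma γ) K (Cc (γ-1) (γ-1) * T^γ) (k+1)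
            = 1/Real.Gamma γ + K * Aseq (1/Real.Gamma γ) K (Cc (γ-1) (γ-1) * T^γ) k
              * (Cc (γ-1) (γ-1) * T^γ) from rfl]
        ring
      have hc4 : K * Bseq γ K k * Cc (γ-1) (((k:ℝ)+1)*γ-1) = Bseq γ K (k+1) := rfl
      have he2 : γ + (((k:ℝ)+1)*γ-1) = ((((k+1):ℕ):ℝ)+1)*γ-1 := by push_cast; ring
      rw [hc3, hc4, he2] at hstep
      exact hstep
  -- Phase B key (Phase A at k₀)
  have hPBkey : ∀ᵐ t ∂(volume.restrict (Ioo (0:ℝ) T)),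
      φ t ≤ ENNReal.ofReal (c₁ * Ab * (T-t)^(γ-1)) +
        ENNReal.ofReal Bb * ∫⁻ s in Ioc t T, ENNReal.ofReal ((s-t)^eb) * φ s := by
    rw [hAbdef, hBbdef, hebdef]
    exact hPA k₀
  -- Phase B iteration
  have hPB : ∀ m : ℕ, ∀ᵐ t ∂(volume.restrict (Ioo (0:ℝ) T)),
      φ t ≤ ENNReal.ofReal (c₁ * Apseq Ab Bb eb T γ m * (T-t)^(γ-1)) +
        ENNReal.ofReal (Eseq Bb eb m) *
          ∫⁻ s in Ioc t T, ENNReal.ofReal ((s-t)^(eb + (m:ℝ)*(eb+1))) * φ s := by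
    intro m
    induction m with
    | zero =>
      simp only [Nat.cast_zero, zero_mul, add_zero]
      rw [show Apseq Ab Bb eb T γ 0 = Ab from rfl, show Eseq Bb eb 0 = Bb from rfl]
      exact hPBkey
    | succ m ih =>
      have hem : (0:ℝ) ≤ eb + (m:ℝ)*(eb+1) := by
        have hm : (0:ℝ) ≤ (m:ℝ) := Nat.cast_nonneg m
        nlinarith
      have hstep := stepB hT hγ0 hγ1 φ hφ
        (mul_nonneg hc₁ hAb.le) hBb heb hPBkey
        (mul_nonneg hc₁ (Apseq_nonneg hAb.le hBb heb hT hγ0 m))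
        (Eseq_nonneg hBb heb m) hem ih
      have hc5 : c₁ * Apseq Ab Bb eb T γ m +
            Eseq Bb eb m * (c₁ * Ab * T^(eb + (m:ℝ)*(eb+1)) * T/γ)
          = c₁ * Apseq Ab Bb eb T γ (m+1) := by
        rw [show Apseq Ab Bb eb T γ (m+1) = Apseq Ab Bb eb T γ m
            + Eseq Bb eb m * (Ab * T^(eb + (m:ℝ)*(eb+1)) * T / γ) from rfl]
        ring
      have hc6 : Eseq Bb eb m * (Bb/((eb + (m:ℝ)*(eb+1))+1)) = Eseq Bb eb (m+1) := rfl
      have he3 : (eb + (m:ℝ)*(eb+1)) + eb + 1 = eb + (((m+1):ℕ):ℝ)*(eb+1) := by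
        push_cast; ring
      rw [hc5, hc6, he3] at hstep
      exact hstep
  -- pass to the limit
  have hA'le : ∀ m, Apseq Ab Bb eb T γ m ≤ Cfin := by
    intro m; rw [hCdef]; exact Apseq_le hAb.le hBb heb hT hγ0 m
  filter_upwards [ae_all_iff.mpr hPB,
    ae_restrict_of_ae_restrict_of_subset Ioo_subset_Ioc_self hφp,
    ae_restrict_mem measurableSet_Ioo] with t hm hφt ht
  obtain ⟨ht0, htT⟩ := ht
  have hg : (0:ℝ) ≤ (T-t)^(γ-1) := Real.rpow_nonneg (by linarith) _
  have hbound : ∀ m : ℕ, φ t ≤ ENNReal.ofReal (c₁ * Cfin * (T-t)^(γ-1)) +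
      ENNReal.ofReal (Eseq Bb eb m * T^(eb + (m:ℝ)*(eb+1))) * (∫⁻ s in Ioc (0:ℝ) T, φ s) := by
    intro m
    have hem : (0:ℝ) ≤ eb + (m:ℝ)*(eb+1) := by
      have hmm : (0:ℝ) ≤ (m:ℝ) := Nat.cast_nonneg m
      nlinarith
    refine le_trans (hm m) (add_le_add ?_ ?_)
    · apply ENNReal.ofReal_le_ofReal
      apply mul_le_mul_of_nonneg_right _ hg
      exact mul_le_mul_of_nonneg_left (hA'le m) hc₁
    · calc ENNReal.ofReal (Eseq Bb eb m) *
            ∫⁻ s in Ioc t T, ENNReal.ofReal ((s-t)^(eb + (m:ℝ)*(eb+1))) * φ s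
          ≤ ENNReal.ofReal (Eseq Bb eb m) *
            (ENNReal.ofReal (T^(eb + (m:ℝ)*(eb+1))) * ∫⁻ s in Ioc (0:ℝ) T, φ s) := by
            apply mul_le_mul_right
            calc ∫⁻ s in Ioc t T, ENNReal.ofReal ((s-t)^(eb + (m:ℝ)*(eb+1))) * φ s
                ≤ ∫⁻ s in Ioc t T, ENNReal.ofReal (T^(eb + (m:ℝ)*(eb+1))) * φ s := by
                  apply setLIntegral_mono' measurableSet_Ioc
                  intro s hs
                  exact mul_le_mul_left (ENNReal.ofReal_le_ofReal
                    (Real.rpow_le_rpow (by linarith [hs.1]) (by linarith [hs.2]) hem)) _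
              _ = ENNReal.ofReal (T^(eb + (m:ℝ)*(eb+1))) * ∫⁻ s in Ioc t T, φ s :=
                  lintegral_const_mul' _ _ ENNReal.ofReal_ne_top
              _ ≤ ENNReal.ofReal (T^(eb + (m:ℝ)*(eb+1))) * ∫⁻ s in Ioc (0:ℝ) T, φ s :=
                  mul_le_mul_right (lintegral_mono_set (Ioc_subset_Ioc_left ht0.le)) _
        _ = ENNReal.ofReal (Eseq Bb eb m * T^(eb + (m:ℝ)*(eb+1))) *
              ∫⁻ s in Ioc (0:ℝ) T, φ s := by
            rw [ENNReal.ofReal_mul (Eseq_nonneg hBb heb m), mul_assoc]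
  have htend : Tendsto (fun m : ℕ => ENNReal.ofReal (c₁ * Cfin * (T-t)^(γ-1)) +
      ENNReal.ofReal (Eseq Bb eb m * T^(eb + (m:ℝ)*(eb+1))) * (∫⁻ s in Ioc (0:ℝ) T, φ s))
      atTop (𝓝 (ENNReal.ofReal (c₁ * Cfin * (T-t)^(γ-1)))) := by
    have h1 : Tendsto (fun m : ℕ => Eseq Bb eb m * T^(eb + (m:ℝ)*(eb+1))) atTop (𝓝 0) := by
      apply squeeze_zero
        (g := fun m : ℕ => (Bb*T^eb) * ((Bb*T^eb*T)^m / (m.factorial : ℝ)))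
      · intro m
        exact mul_nonneg (Eseq_nonneg hBb heb m) (Real.rpow_nonneg hT.le _)
      · intro m
        have h := Eseq_le hT hBb heb m
        rw [mul_div_assoc] at h
        exact h
      · have h2 : Tendsto (fun m : ℕ => (Bb*T^eb*T)^m / (m.factorial : ℝ)) atTop (𝓝 0) :=
          FloorSemiring.tendsto_pow_div_factorial_atTop _
        have h3 := h2.const_mul (Bb*T^eb)
        simpa using h3
    have h4 : Tendsto (fun m : ℕ => ENNReal.ofReal (Eseq Bb eb m *
        T^(eb + (m:ℝ)*(eb+1))) * (∫⁻ s in Ioc (0:ℝ) T, φ s)) atTop (𝓝 0) := by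
      have h5 : Tendsto (fun m : ℕ => ENNReal.ofReal (Eseq Bb eb m *
          T^(eb + (m:ℝ)*(eb+1)))) atTop (𝓝 0) := by
        have h6 := ENNReal.tendsto_ofReal h1
        simpa using h6
      have h7 := ENNReal.Tendsto.mul_const h5 (Or.inr hI)
      simpa using h7
    have h8 := Tendsto.add
      (tendsto_const_nhds (x := ENNReal.ofReal (c₁ * Cfin * (T-t)^(γ-1))) (f := atTop)) h4
    simpa using h8
  have hfinal : φ t ≤ ENNReal.ofReal (c₁ * Cfin * (T-t)^(γ-1)) :=
    ge_of_tendsto' htend hbound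
  rw [← hφt] at hfinal
  have h9 : ‖p t‖ ≤ c₁ * Cfin * (T-t)^(γ-1) :=
    (ENNReal.ofReal_le_ofReal_iff
      (mul_nonneg (mul_nonneg hc₁ hCfin.le) hg)).mp hfinal
  calc ‖p t‖ ≤ c₁ * Cfin * (T-t)^(γ-1) := h9
    _ = Cfin * c₁ * (T-t)^(γ-1) := by ring
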